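/- Fix n ≥ 1, d ≥ 1, configurations x, y : Fin n → ℝ^d, and vectors u, v ∈ ℝ^d. Then min-SWGG behaves under translations exactly like the squared Wasserstein distance: min-SWGG((x−u),(y−v)) = min-SWGG(x,y) − 2⟨u − v, m_x − m_y⟩ + ‖u − v‖², where m_x := (1/n) Σ_i x_i and m_y := (1/n) Σ_i y_i. -/

import Mathlib

open scoped RealInnerProductSpace

/-- The SWGG value associated to configurations `x, y` and permutations `σ, τ`:
`(1/n) Σ_i ‖x_{σ(i)} − y_{τ(i)}‖²`. -/
noncomputable def SWGG {n d : ℕ} (x y : Fin n → EuclideanSpace ℝ (Fin d))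
    (σ τ : Equiv.Perm (Fin n)) : ℝ :=
  (n : ℝ)⁻¹ * ∑ i, ‖x (σ i) - y (τ i)‖ ^ 2

/-- A permutation `σ` is θ-sorting for `x` if `i ↦ ⟨x_{σ(i)}, θ⟩` is nondecreasing. -/
def IsSorting {n d : ℕ} (θ : EuclideanSpace ℝ (Fin d))
    (x : Fin n → EuclideanSpace ℝ (Fin d)) (σ : Equiv.Perm (Fin n)) : Prop :=
  Monotone fun i => ⟪x (σ i), θ⟫

/-- Squared 2-Wasserstein distance between the uniform empirical measures of `x` and `y`:
`(1/n) · min_ρ Σ_i ‖x_i − y_{ρ(i)}‖²`. -/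
noncomputable def Wsq {n d : ℕ} (x y : Fin n → EuclideanSpace ℝ (Fin d)) : ℝ :=
  (n : ℝ)⁻¹ * ⨅ ρ : Equiv.Perm (Fin n), ∑ i, ‖x i - y (ρ i)‖ ^ 2

/-- `min-SWGG`: the infimum of `SWGG x y θ σ τ` over unit vectors `θ` and
θ-sorting permutations `σ` for `x`, `τ` for `y`. -/
noncomputable def minSWGG {n d : ℕ} (x y : Fin n → EuclideanSpace ℝ (Fin d)) : ℝ :=
  sInf { r : ℝ | ∃ θ : EuclideanSpace ℝ (Fin d), ∃ σ τ : Equiv.Perm (Fin n),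
    ‖θ‖ = 1 ∧ IsSorting θ x σ ∧ IsSorting θ y τ ∧ r = SWGG x y σ τ }

/-- `min-SWGG` behaves under translations exactly like the squared Wasserstein distance. -/
theorem minSWGG_translation {n d : ℕ} (hn : 1 ≤ n) (hd : 1 ≤ d)
    (x y : Fin n → EuclideanSpace ℝ (Fin d)) (u v : EuclideanSpace ℝ (Fin d)) :
    minSWGG (fun i => x i - u) (fun i => y i - v) =
      minSWGG x y
        - 2 * ⟪u - v, (n : ℝ)⁻¹ • ∑ i, x i - (n : ℝ)⁻¹ • ∑ i, y i⟫
        + ‖u - v‖ ^ 2 := by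
  have hn0 : (n : ℝ) ≠ 0 := Nat.cast_ne_zero.mpr (by omega)
  set c : ℝ := -(2 * ⟪u - v, (n : ℝ)⁻¹ • ∑ i, x i - (n : ℝ)⁻¹ • ∑ i, y i⟫) + ‖u - v‖ ^ 2
    with hc
  -- key pointwise identity for SWGG
  have key : ∀ σ τ : Equiv.Perm (Fin n),
      SWGG (fun i => x i - u) (fun i => y i - v) σ τ = SWGG x y σ τ + c := by
    intro σ τ
    unfold SWGG
    have h1 : ∀ i, ‖(x (σ i) - u) - (y (τ i) - v)‖ ^ 2
        = ‖x (σ i) - y (τ i)‖ ^ 2 - 2 * ⟪x (σ i) - y (τ i), u - v⟫ + ‖u - v‖ ^ 2 := by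
      intro i
      have h2 : (x (σ i) - u) - (y (τ i) - v) = (x (σ i) - y (τ i)) - (u - v) := by abel
      rw [h2, norm_sub_sq_real]
    have hsum : ∑ i, ‖(x (σ i) - u) - (y (τ i) - v)‖ ^ 2
        = ∑ i, ‖x (σ i) - y (τ i)‖ ^ 2
          - 2 * ⟪∑ i, x i - ∑ i, y i, u - v⟫ + (n : ℝ) * ‖u - v‖ ^ 2 := by
      rw [Finset.sum_congr rfl (fun i _ => h1 i)]
      rw [Finset.sum_add_distrib, Finset.sum_sub_distrib]
      rw [Finset.sum_const, Finset.card_univ, Fintype.card_fin, nsmul_eq_mul]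
      congr 1
      rw [← Finset.mul_sum, ← sum_inner]
      congr 2
      rw [Finset.sum_sub_distrib, Equiv.sum_comp σ x, Equiv.sum_comp τ y]
    rw [hsum, hc]
    have hinner : ⟪u - v, (n : ℝ)⁻¹ • ∑ i, x i - (n : ℝ)⁻¹ • ∑ i, y i⟫
        = (n : ℝ)⁻¹ * ⟪∑ i, x i - ∑ i, y i, u - v⟫ := by
      rw [← smul_sub, real_inner_smul_right, real_inner_comm]
    rw [hinner]
    field_simp
    ring
  -- sorting is invariant under translation
  have hsort : ∀ (θ : EuclideanSpace ℝ (Fin d)) (w : Fin n → EuclideanSpace ℝ (Fin d))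
      (z : EuclideanSpace ℝ (Fin d)) (σ : Equiv.Perm (Fin n)),
      IsSorting θ (fun i => w i - z) σ ↔ IsSorting θ w σ := by
    intro θ w z σ
    unfold IsSorting
    simp only [inner_sub_left]
    constructor <;> intro h a b hab <;> have h2 := h hab <;>
      simp only at h2 ⊢ <;> linarith
  set S : Set ℝ := { r : ℝ | ∃ θ : EuclideanSpace ℝ (Fin d), ∃ σ τ : Equiv.Perm (Fin n),
    ‖θ‖ = 1 ∧ IsSorting θ x σ ∧ IsSorting θ y τ ∧ r = SWGG x y σ τ } with hS
  have hset : { r : ℝ | ∃ θ : EuclideanSpace ℝ (Fin d), ∃ σ τ : Equiv.Perm (Fin n),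
      ‖θ‖ = 1 ∧ IsSorting θ (fun i => x i - u) σ ∧ IsSorting θ (fun i => y i - v) τ ∧
      r = SWGG (fun i => x i - u) (fun i => y i - v) σ τ } = (fun r => r + c) '' S := by
    ext r
    constructor
    · rintro ⟨θ, σ, τ, h1, h2, h3, rfl⟩
      exact ⟨SWGG x y σ τ, ⟨θ, σ, τ, h1, (hsort θ x u σ).mp h2, (hsort θ y v τ).mp h3, rfl⟩,
        (key σ τ).symm⟩
    · rintro ⟨s, ⟨θ, σ, τ, h1, h2, h3, rfl⟩, rfl⟩
      exact ⟨θ, σ, τ, h1, (hsort θ x u σ).mpr h2, (hsort θ y v τ).mpr h3, (key σ τ).symm⟩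
  have hne : S.Nonempty := by
    refine ⟨SWGG x y (Tuple.sort (fun i => ⟪x i, EuclideanSpace.single (⟨0, hd⟩ : Fin d) (1:ℝ)⟫))
      (Tuple.sort (fun i => ⟪y i, EuclideanSpace.single (⟨0, hd⟩ : Fin d) (1:ℝ)⟫)),
      EuclideanSpace.single (⟨0, hd⟩ : Fin d) (1:ℝ), _, _, ?_, ?_, ?_, rfl⟩
    · rw [EuclideanSpace.norm_single, norm_one]
    · have h := Tuple.monotone_sort
        (fun i => ⟪x i, EuclideanSpace.single (⟨0, hd⟩ : Fin d) (1:ℝ)⟫)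
      unfold IsSorting
      exact h
    · have h := Tuple.monotone_sort
        (fun i => ⟪y i, EuclideanSpace.single (⟨0, hd⟩ : Fin d) (1:ℝ)⟫)
      unfold IsSorting
      exact h
  have hbdd : BddBelow S := by
    refine ⟨0, ?_⟩
    rintro r ⟨θ, σ, τ, h1, h2, h3, rfl⟩
    unfold SWGG
    exact mul_nonneg (by positivity) (Finset.sum_nonneg fun i _ => sq_nonneg _)
  have hmain : sInf ((fun r => r + c) '' S) = sInf S + c := by
    exact (Monotone.map_csInf_of_continuousAt
      ((continuous_id.add continuous_const).continuousAt)
      (fun a b hab => by simpa using hab) hne hbdd).symm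
  have hlhs : minSWGG (fun i => x i - u) (fun i => y i - v) = sInf S + c := by
    unfold minSWGG
    rw [hset]
    exact hmain
  rw [hlhs]
  have hrhs : minSWGG x y = sInf S := by unfold minSWGG; rw [hS]
  rw [hrhs, hc]
  ring
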